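/- For every continuous bounded complex cosine function of the form cos(at) and every discontinuous bounded complex cosine function (c(t))_{t∈ℝ}, one has sup_{t∈ℝ} |cos(at) − c(t)| = 2, and moreover limsup_{t→0} |cos(at) − c(t)| = 2. -/

import Mathlib

open Filter Real Topology

namespace Stmt11Aux

/-- cluster values of `r` at `0` (along arbitrary sequences tending to `0`). -/
def A (r : ℝ → ℝ) : Set ℝ :=
  {x | ∃ u : ℕ → ℝ, Tendsto u atTop (𝓝 0) ∧ Tendsto (fun n => r (u n)) atTop (𝓝 x)}

lemma cos_dal (x y : ℝ) :
    Real.cos (x + y) + Real.cos (x - y) = 2 * Real.cos x * Real.cos y := by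
  rw [Real.cos_add, Real.cos_sub]; ring

variable {r : ℝ → ℝ}

section basic
variable (hr0 : r 0 = 1) (hr : ∀ s t : ℝ, r (s + t) + r (s - t) = 2 * r s * r t)

include hr0 hr

lemma r_even (t : ℝ) : r (-t) = r t := by
  have h := hr 0 t
  rw [zero_add, zero_sub, hr0] at h
  linarith

lemma r_two (t : ℝ) : r (2 * t) = 2 * r t ^ 2 - 1 := by
  have h := hr t t
  rw [sub_self, hr0] at h
  have e : t + t = 2 * t := by ring
  rw [e] at h
  linear_combination h

lemma r_mul (s t : ℝ) : r (s + t) * r (s - t) = r s ^ 2 + r t ^ 2 - 1 := by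
  have h := hr (s + t) (s - t)
  have e1 : s + t + (s - t) = 2 * s := by ring
  have e2 : s + t - (s - t) = 2 * t := by ring
  rw [e1, e2, r_two hr0 hr, r_two hr0 hr] at h
  linear_combination -h / 2

lemma r_cheb : ∀ (k : ℕ) (t φ : ℝ), r t = Real.cos φ → r (k * t) = Real.cos (k * φ) := by
  intro k
  induction k using Nat.strong_induction_on with
  | _ k ih =>
    match k with
    | 0 => intro t φ h; simpa using hr0
    | 1 => intro t φ h; simpa using h
    | (n+2) =>
      intro t φ h
      have h1 := ih (n+1) (by omega) t φ h
      have h0 := ih n (by omega) t φ h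
      push_cast at h1 h0 ⊢
      have key := hr (((n:ℝ)+1) * t) t
      have e1 : ((n:ℝ)+1) * t + t = ((n:ℝ)+2) * t := by ring
      have e2 : ((n:ℝ)+1) * t - t = (n:ℝ) * t := by ring
      rw [e1, e2] at key
      have c1 := cos_dal (((n:ℝ)+1) * φ) φ
      have e3 : ((n:ℝ)+1) * φ + φ = ((n:ℝ)+2) * φ := by ring
      have e4 : ((n:ℝ)+1) * φ - φ = (n:ℝ) * φ := by ring
      rw [e3, e4] at c1
      rw [h1, h, h0] at key
      linarith [key, c1]

end basic



section bound
variable (hr0 : r 0 = 1) (hr : ∀ s t : ℝ, r (s + t) + r (s - t) = 2 * r s * r t)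
include hr0 hr

lemma abs_r_le_one {M : ℝ} (hbM : ∀ t, |r t| ≤ M) (t : ℝ) : |r t| ≤ 1 := by
  by_contra hlt
  push_neg at hlt
  set ε := |r t| - 1 with hε
  have hε0 : 0 < ε := by linarith
  have key : ∀ n : ℕ, 1 + 2 ^ n * ε ≤ |r (2 ^ n * t)| := by
    intro n
    induction n with
    | zero => simp [hε]
    | succ n ihn =>
      have e : (2:ℝ) ^ (n+1) * t = 2 * (2 ^ n * t) := by ring
      rw [e, r_two hr0 hr]
      have h2 : (1 + 2 ^ n * ε) ^ 2 ≤ r (2 ^ n * t) ^ 2 := by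
        rw [← sq_abs (r (2 ^ n * t))]
        have h1 : (0:ℝ) ≤ 1 + 2 ^ n * ε := by positivity
        exact pow_le_pow_left₀ h1 ihn 2
      have h3 := le_abs_self (2 * r (2 ^ n * t) ^ 2 - 1)
      have h4 : (0:ℝ) < 2 ^ n := by positivity
      have e2 : (2:ℝ) ^ (n+1) = 2 * 2 ^ n := by ring
      nlinarith [h2, h3, h4, hε0, mul_pos h4 hε0, sq_nonneg ((2:ℝ) ^ n * ε)]
  obtain ⟨n, hn⟩ := pow_unbounded_of_one_lt (M / ε) (by norm_num : (1:ℝ) < 2)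
  have hMn : M < 2 ^ n * ε := by
    rw [div_lt_iff₀ hε0] at hn; linarith
  have := key n
  have := hbM (2 ^ n * t)
  linarith

end bound

/-- From non-convergence, extract witnesses at every scale. -/
lemma not_tendsto_exists {g : ℝ → ℝ} {L : ℝ}
    (hnt : ¬ Tendsto g (𝓝 0) (𝓝 L)) :
    ∃ ε > 0, ∀ δ > 0, ∃ t : ℝ, |t| < δ ∧ ε ≤ |g t - L| := by
  rw [Metric.tendsto_nhds_nhds] at hnt
  push_neg at hnt
  obtain ⟨ε, hε, h⟩ := hnt
  refine ⟨ε, hε, fun δ hδ => ?_⟩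
  obtain ⟨t, ht1, ht2⟩ := h δ hδ
  rw [Real.dist_eq, sub_zero] at ht1
  rw [Real.dist_eq] at ht2
  exact ⟨t, ht1, ht2⟩

lemma seq_to_zero : Tendsto (fun n : ℕ => 1 / ((n:ℝ) + 1)) atTop (𝓝 0) :=
  tendsto_one_div_add_atTop_nhds_zero_nat

section Aset
variable (hr0 : r 0 = 1) (hr : ∀ s t : ℝ, r (s + t) + r (s - t) = 2 * r s * r t)
  (hb1 : ∀ t, |r t| ≤ 1)

lemma mem_A_Icc (hb1 : ∀ t, |r t| ≤ 1) {x : ℝ} (hx : x ∈ A r) : x ∈ Set.Icc (-1:ℝ) 1 := by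
  obtain ⟨u, hu0, hux⟩ := hx
  exact isClosed_Icc.mem_of_tendsto hux
    (Eventually.of_forall fun n => by
      have := abs_le.mp (hb1 (u n)); exact ⟨this.1, this.2⟩)

lemma one_mem_A (hr0 : r 0 = 1) : (1:ℝ) ∈ A r :=
  ⟨fun _ => 0, tendsto_const_nhds, by simpa [hr0] using tendsto_const_nhds⟩

lemma A_closed : IsClosed (A r) := by
  rw [← isSeqClosed_iff_isClosed]
  intro xs x hxs hlim
  have hpick : ∀ n : ℕ, ∃ t : ℝ, |t| < 1 / ((n:ℝ) + 1) ∧ |r t - xs n| < 1 / ((n:ℝ) + 1) := by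
    intro n
    obtain ⟨u, hu0, hux⟩ := hxs n
    have hpos : (0:ℝ) < 1 / ((n:ℝ) + 1) := by positivity
    have h1 : ∀ᶠ m in atTop, |u m| < 1 / ((n:ℝ) + 1) := by
      have := hu0.eventually (Metric.ball_mem_nhds (0:ℝ) hpos)
      simpa [Real.dist_eq] using this
    have h2 : ∀ᶠ m in atTop, |r (u m) - xs n| < 1 / ((n:ℝ) + 1) := by
      have := hux.eventually (Metric.ball_mem_nhds (xs n) hpos)
      simpa [Real.dist_eq] using this
    obtain ⟨m, hm1, hm2⟩ := (h1.and h2).exists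
    exact ⟨u m, hm1, hm2⟩
  choose t ht1 ht2 using hpick
  refine ⟨t, ?_, ?_⟩
  · exact squeeze_zero_norm (fun n => (ht1 n).le) seq_to_zero
  · rw [← tendsto_sub_nhds_zero_iff]
    apply squeeze_zero_norm (a := fun (n:ℕ) => 1 / ((n:ℝ) + 1) + |xs n - x|)
    · intro n
      have : r (t n) - x = (r (t n) - xs n) + (xs n - x) := by ring
      rw [Real.norm_eq_abs, this]
      exact (abs_add_le _ _).trans (by have := (ht2 n).le; gcongr)
    · have h2 : Tendsto (fun n => |xs n - x|) atTop (𝓝 0) := by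
        have := (hlim.sub (tendsto_const_nhds (x := x))).abs
        simpa using this
      simpa using seq_to_zero.add h2

end Aset



section Aops
variable (hr0 : r 0 = 1) (hr : ∀ s t : ℝ, r (s + t) + r (s - t) = 2 * r s * r t)
  (hb1 : ∀ t, |r t| ≤ 1)
include hr0 hr hb1

lemma A_addcos {α β : ℝ} (hα : Real.cos α ∈ A r) (hβ : Real.cos β ∈ A r) :
    Real.cos (α + β) ∈ A r ∧ Real.cos (α - β) ∈ A r := by
  obtain ⟨u, hu0, hux⟩ := hα
  obtain ⟨v, hv0, hvy⟩ := hβ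
  obtain ⟨L, hL, φ, hφ, hconv⟩ := (isCompact_Icc (a := (-1:ℝ)) (b := 1)).tendsto_subseq
    (x := fun n => r (u n + v n))
    (fun n => ⟨(abs_le.mp (hb1 _)).1, (abs_le.mp (hb1 _)).2⟩)
  have huφ : Tendsto (fun n => u (φ n)) atTop (𝓝 0) := hu0.comp hφ.tendsto_atTop
  have hvφ : Tendsto (fun n => v (φ n)) atTop (𝓝 0) := hv0.comp hφ.tendsto_atTop
  have huxφ : Tendsto (fun n => r (u (φ n))) atTop (𝓝 (Real.cos α)) :=
    hux.comp hφ.tendsto_atTop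
  have hvyφ : Tendsto (fun n => r (v (φ n))) atTop (𝓝 (Real.cos β)) :=
    hvy.comp hφ.tendsto_atTop
  have hconv' : Tendsto (fun n => r (u (φ n) + v (φ n))) atTop (𝓝 L) := hconv
  have hdiff : Tendsto (fun n => r (u (φ n) - v (φ n))) atTop
      (𝓝 (2 * Real.cos α * Real.cos β - L)) := by
    have he : ∀ n, r (u (φ n) - v (φ n))
        = 2 * r (u (φ n)) * r (v (φ n)) - r (u (φ n) + v (φ n)) := by
      intro n; linarith [hr (u (φ n)) (v (φ n))]
    exact Tendsto.congr (fun n => (he n).symm)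
      (((tendsto_const_nhds (x := (2:ℝ))).mul huxφ |>.mul hvyφ).sub hconv')
  have hLA : L ∈ A r := ⟨fun n => u (φ n) + v (φ n), by simpa using huφ.add hvφ, hconv'⟩
  have hDA : (2 * Real.cos α * Real.cos β - L) ∈ A r :=
    ⟨fun n => u (φ n) - v (φ n), by simpa using huφ.sub hvφ, hdiff⟩
  have hprod : L * (2 * Real.cos α * Real.cos β - L)
      = Real.cos α ^ 2 + Real.cos β ^ 2 - 1 := by
    have h1 : Tendsto (fun n => r (u (φ n) + v (φ n)) * r (u (φ n) - v (φ n))) atTop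
        (𝓝 (L * (2 * Real.cos α * Real.cos β - L))) := hconv'.mul hdiff
    have h2 : Tendsto (fun n => r (u (φ n)) ^ 2 + r (v (φ n)) ^ 2 - 1) atTop
        (𝓝 (Real.cos α ^ 2 + Real.cos β ^ 2 - 1)) :=
      ((huxφ.pow 2).add (hvyφ.pow 2)).sub tendsto_const_nhds
    exact tendsto_nhds_unique
      (h1.congr (fun n => r_mul hr0 hr (u (φ n)) (v (φ n)))) h2
  have hq : Real.cos (α + β) + Real.cos (α - β) = 2 * Real.cos α * Real.cos β := cos_dal α β
  have hpq : Real.cos (α + β) * Real.cos (α - β)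
      = Real.cos α ^ 2 + Real.cos β ^ 2 - 1 := by
    have s1 := Real.sin_sq_add_cos_sq α
    have s2 := Real.sin_sq_add_cos_sq β
    rw [Real.cos_add, Real.cos_sub]
    linear_combination (- Real.sin β ^ 2) * s1 + (Real.cos α ^ 2 - 1) * s2
  have hz : (Real.cos (α + β) - L)
      * (Real.cos (α + β) - (2 * Real.cos α * Real.cos β - L)) = 0 := by
    linear_combination Real.cos (α + β) * hq + hprod - hpq
  rcases mul_eq_zero.mp hz with h | h
  · have hp : Real.cos (α + β) = L := by linarith
    have hq' : Real.cos (α - β) = 2 * Real.cos α * Real.cos β - L := by linarith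
    exact ⟨hp ▸ hLA, hq' ▸ hDA⟩
  · have hp : Real.cos (α + β) = 2 * Real.cos α * Real.cos β - L := by linarith
    have hq' : Real.cos (α - β) = L := by linarith
    exact ⟨hp ▸ hDA, hq' ▸ hLA⟩

lemma A_div {x : ℝ} (hx : x ∈ A r) (k : ℕ) (hk : 1 ≤ k) :
    ∃ ψ : ℝ, Real.cos ψ ∈ A r ∧ Real.cos (k * ψ) = x := by
  obtain ⟨u, hu0, hux⟩ := hx
  have hk0 : ((k:ℝ)) ≠ 0 := by positivity
  have hku : ∀ m : ℝ, (k:ℝ) * (m / k) = m := fun m => by field_simp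
  obtain ⟨y, hy, φ, hφ, hconv⟩ := (isCompact_Icc (a := (-1:ℝ)) (b := 1)).tendsto_subseq
    (x := fun n => r (u n / k))
    (fun n => ⟨(abs_le.mp (hb1 _)).1, (abs_le.mp (hb1 _)).2⟩)
  have hconv' : Tendsto (fun n => r (u (φ n) / k)) atTop (𝓝 y) := hconv
  refine ⟨Real.arccos y, ⟨fun n => u (φ n) / k, ?_, ?_⟩, ?_⟩
  · have h := (hu0.comp hφ.tendsto_atTop).div_const (k:ℝ)
    simpa using h
  · rw [Real.cos_arccos hy.1 hy.2]; exact hconv'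
  · have hpt : ∀ n, r (u (φ n)) = Real.cos (k * Real.arccos (r (u (φ n) / k))) := by
      intro n
      have h1 : r (u (φ n) / k) = Real.cos (Real.arccos (r (u (φ n) / k))) :=
        (Real.cos_arccos (abs_le.mp (hb1 _)).1 (abs_le.mp (hb1 _)).2).symm
      have h2 := r_cheb hr0 hr k (u (φ n) / k) (Real.arccos (r (u (φ n) / k))) h1
      rw [hku (u (φ n))] at h2
      exact h2
    have h2 : Tendsto (fun n => Real.cos ((k:ℝ) * Real.arccos (r (u (φ n) / k)))) atTop
        (𝓝 (Real.cos (k * Real.arccos y))) := by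
      have ha : Tendsto (fun n => Real.arccos (r (u (φ n) / k))) atTop
          (𝓝 (Real.arccos y)) := (Real.continuous_arccos.tendsto _).comp hconv'
      have hm : Tendsto (fun n => (k:ℝ) * Real.arccos (r (u (φ n) / k))) atTop
          (𝓝 ((k:ℝ) * Real.arccos y)) := tendsto_const_nhds.mul ha
      exact (Real.continuous_cos.tendsto _).comp hm
    have h1 : Tendsto (fun n => r (u (φ n))) atTop (𝓝 x) := hux.comp hφ.tendsto_atTop
    exact (tendsto_nhds_unique (h1.congr hpt) h2).symm

end Aops



section Main
variable (hr0 : r 0 = 1) (hr : ∀ s t : ℝ, r (s + t) + r (s - t) = 2 * r s * r t)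
  (hb1 : ∀ t, |r t| ≤ 1)
include hr0 hr hb1

lemma cont_of_cont0 (h0 : Tendsto r (𝓝 0) (𝓝 1)) : Continuous r := by
  rw [continuous_iff_continuousAt]
  intro s
  have key : Tendsto (fun h => r (s + h)) (𝓝 0) (𝓝 (r s)) := by
    by_contra hnt
    obtain ⟨ε, hε, hwit⟩ := not_tendsto_exists hnt
    have hpick : ∀ n : ℕ, ∃ t : ℝ, |t| < 1/((n:ℝ)+1) ∧ ε ≤ |r (s + t) - r s| :=
      fun n => hwit _ (by positivity)
    choose w hw1 hw2 using hpick
    have hw0 : Tendsto w atTop (𝓝 0) := squeeze_zero_norm (fun n => (hw1 n).le) seq_to_zero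
    obtain ⟨v, hv, φ, hφ, hconv⟩ := (isCompact_Icc (a := (-1:ℝ)) (b := 1)).tendsto_subseq
      (x := fun n => r (s + w n))
      (fun n => ⟨(abs_le.mp (hb1 _)).1, (abs_le.mp (hb1 _)).2⟩)
    have hconv' : Tendsto (fun n => r (s + w (φ n))) atTop (𝓝 v) := hconv
    have hwφ : Tendsto (fun n => w (φ n)) atTop (𝓝 0) := hw0.comp hφ.tendsto_atTop
    set P : ℝ → Prop := fun z => ∃ g : ℕ → ℝ,
      Tendsto g atTop (𝓝 0) ∧ Tendsto (fun n => r (s + g n)) atTop (𝓝 z) with hP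
    have hPv : P v := ⟨fun n => w (φ n), hwφ, hconv'⟩
    have hstep : ∀ z, P z → P (2*z - r s) := by
      rintro z ⟨g, hg0, hgz⟩
      refine ⟨fun n => 2 * g n, by simpa using hg0.const_mul 2, ?_⟩
      have he : ∀ n, r (s + 2 * g n) = 2 * r (s + g n) * r (g n) - r s := by
        intro n
        have h := hr (s + g n) (g n)
        have e1 : s + g n + g n = s + 2 * g n := by ring
        have e2 : s + g n - g n = s := by ring
        rw [e1, e2] at h; linarith
      have hrg : Tendsto (fun n => r (g n)) atTop (𝓝 1) := h0.comp hg0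
      have hlim := ((tendsto_const_nhds (x := (2:ℝ))).mul hgz |>.mul hrg).sub
        (tendsto_const_nhds (x := r s))
      have : (2 * z * 1 - r s) = 2 * z - r s := by ring
      rw [this] at hlim
      exact Tendsto.congr (fun n => (he n).symm) hlim
    have hbd : ∀ z, P z → |z| ≤ 1 := by
      rintro z ⟨g, hg0, hgz⟩
      have : z ∈ Set.Icc (-1:ℝ) 1 := isClosed_Icc.mem_of_tendsto hgz
        (Eventually.of_forall fun n => ⟨(abs_le.mp (hb1 _)).1, (abs_le.mp (hb1 _)).2⟩)
      exact abs_le.mpr ⟨this.1, this.2⟩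
    have hiter : ∀ m : ℕ, P (2^m * (v - r s) + r s) := by
      intro m
      induction m with
      | zero => simpa using hPv
      | succ m ihm =>
        have h2 := hstep _ ihm
        have e : 2 * (2^m * (v - r s) + r s) - r s = 2^(m+1) * (v - r s) + r s := by ring
        rwa [e] at h2
    have hvs : ε ≤ |v - r s| := by
      have hlim : Tendsto (fun n => |r (s + w (φ n)) - r s|) atTop (𝓝 |v - r s|) :=
        (hconv'.sub tendsto_const_nhds).abs
      exact ge_of_tendsto hlim (Eventually.of_forall fun n => hw2 (φ n))
    obtain ⟨m, hm⟩ := pow_unbounded_of_one_lt (2 / ε) (by norm_num : (1:ℝ) < 2)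
    have h1 := hbd _ (hiter m)
    have h2 : (2:ℝ)^m * |v - r s| ≤ 2 := by
      have e : (2:ℝ)^m*(v - r s) = ((2:ℝ)^m*(v - r s) + r s) + (-(r s)) := by ring
      have h3 : |(2:ℝ)^m * (v - r s)| ≤ 2 := by
        calc |(2:ℝ)^m*(v - r s)| = |((2:ℝ)^m*(v - r s)+ r s) + (-(r s))| := by rw [← e]
        _ ≤ |(2:ℝ)^m*(v - r s)+ r s| + |(-(r s))| := abs_add_le _ _
        _ ≤ 1 + 1 := by rw [abs_neg]; exact add_le_add h1 (hb1 s)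
        _ = 2 := by norm_num
      rwa [abs_mul, abs_of_nonneg (by positivity : (0:ℝ) ≤ 2^m)] at h3
    have hε2 : 2 < 2^m * ε := by
      rw [div_lt_iff₀ hε] at hm
      linarith
    have hmono : (2:ℝ)^m * ε ≤ 2^m * |v - r s| := by
      have : (0:ℝ) < 2^m := by positivity
      nlinarith
    linarith
  rw [ContinuousAt]
  have hmap : 𝓝 s = Filter.map (fun h => s + h) (𝓝 (0:ℝ)) := (map_add_left_nhds_zero s).symm
  rw [hmap, tendsto_map'_iff]
  exact key

lemma neg_one_mem_A (hnt : ¬ Tendsto r (𝓝 0) (𝓝 1)) : (-1:ℝ) ∈ A r := by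
  obtain ⟨ε, hε, hwit⟩ := not_tendsto_exists hnt
  have hpick : ∀ n : ℕ, ∃ t : ℝ, |t| < 1/((n:ℝ)+1) ∧ ε ≤ |r t - 1| :=
    fun n => hwit _ (by positivity)
  choose w hw1 hw2 using hpick
  have hw0 : Tendsto w atTop (𝓝 0) := squeeze_zero_norm (fun n => (hw1 n).le) seq_to_zero
  obtain ⟨x, hxI, φ, hφ, hconv⟩ := (isCompact_Icc (a := (-1:ℝ)) (b := 1)).tendsto_subseq
    (x := fun n => r (w n))
    (fun n => ⟨(abs_le.mp (hb1 _)).1, (abs_le.mp (hb1 _)).2⟩)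
  have hconv' : Tendsto (fun n => r (w (φ n))) atTop (𝓝 x) := hconv
  have hxA : x ∈ A r := ⟨fun n => w (φ n), hw0.comp hφ.tendsto_atTop, hconv'⟩
  have hx1 : x ≠ 1 := by
    have hlim : Tendsto (fun n => |r (w (φ n)) - 1|) atTop (𝓝 |x - 1|) :=
      (hconv'.sub tendsto_const_nhds).abs
    have hge := ge_of_tendsto hlim (Eventually.of_forall fun n => hw2 (φ n))
    intro h
    rw [h] at hge
    simp at hge
    linarith
  set S : AddSubgroup ℝ :=
    { carrier := {θ : ℝ | Real.cos θ ∈ A r}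
      zero_mem' := by
        have := one_mem_A (r := r) hr0
        simpa using this
      add_mem' := fun {a b} ha hb => (A_addcos hr0 hr hb1 ha hb).1
      neg_mem' := fun {a} ha => by simpa [Real.cos_neg] using ha } with hSdef
  have hmemS : ∀ θ : ℝ, θ ∈ S ↔ Real.cos θ ∈ A r := fun θ => Iff.rfl
  rcases S.dense_or_cyclic with hdense | ⟨g, hg⟩
  · have hclosed : IsClosed (S : Set ℝ) := (A_closed (r := r)).preimage Real.continuous_cos
    have huniv : (S : Set ℝ) = Set.univ := by
      rw [← hclosed.closure_eq, hdense.closure_eq]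
    have hπ : π ∈ (S : Set ℝ) := by rw [huniv]; exact Set.mem_univ π
    have : Real.cos π ∈ A r := hπ
    simpa [Real.cos_pi] using this
  · exfalso
    have h2π : 2 * π ∈ S := by
      have : Real.cos (2 * π) ∈ A r := by rw [Real.cos_two_pi]; exact one_mem_A hr0
      exact this
    rw [hg, AddSubgroup.mem_closure_singleton] at h2π
    obtain ⟨m, hm⟩ := h2π
    have hg0 : g ≠ 0 := by
      rintro rfl
      rw [smul_zero] at hm
      exact Real.pi_ne_zero (by linarith)
    have hm0 : m ≠ 0 := by
      rintro rfl
      rw [zero_smul] at hm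
      exact Real.pi_ne_zero (by linarith)
    have hxI' := mem_A_Icc hb1 hxA
    have hθx : Real.cos (Real.arccos x) = x := Real.cos_arccos hxI'.1 hxI'.2
    have hθxS : Real.arccos x ∈ S := by rw [hmemS, hθx]; exact hxA
    rw [hg, AddSubgroup.mem_closure_singleton] at hθxS
    obtain ⟨i, hi⟩ := hθxS
    set k := m.natAbs with hkdef
    have hk1 : 1 ≤ k := by
      have := Int.natAbs_pos.mpr hm0
      omega
    obtain ⟨ψ, hψA, hψcos⟩ := A_div hr0 hr hb1 hxA k hk1
    have hψS : ψ ∈ S := hψA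
    rw [hg, AddSubgroup.mem_closure_singleton] at hψS
    obtain ⟨j, hj⟩ := hψS
    have hcc : Real.cos ((k:ℝ) * ψ) = Real.cos (Real.arccos x) := by rw [hψcos, hθx]
    rw [Real.cos_eq_cos_iff] at hcc
    obtain ⟨n, hn⟩ := hcc
    have hm' : (m:ℝ) * g = 2*π := by rw [← hm]; simp [zsmul_eq_mul]
    have hi' : (i:ℝ) * g = Real.arccos x := by rw [← hi]; simp [zsmul_eq_mul]
    have hj' : (j:ℝ) * g = ψ := by rw [← hj]; simp [zsmul_eq_mul]
    have hkabs : ((k:ℤ):ℝ) = |(m:ℝ)| := by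
      rw [hkdef]
      push_cast [Nat.cast_natAbs]
      rfl
    have hdvd : m ∣ i := by
      have hmk : m ∣ ((k:ℕ):ℤ) := by
        rw [hkdef]; exact Int.dvd_natAbs.mpr dvd_rfl
      rcases hn with hn | hn
      · have ereal : (i:ℝ) * g = ((n:ℝ)*(m:ℝ) + ((k:ℕ):ℝ)*(j:ℝ)) * g := by
          rw [hi', hn, ← hj']
          have : (2:ℝ) * n * π = (n:ℝ) * (2*π) := by ring
          rw [this, ← hm']
          ring
        have ei : (i:ℝ) = (n:ℝ)*(m:ℝ) + ((k:ℕ):ℝ)*(j:ℝ) := mul_right_cancel₀ hg0 ereal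
        have eiz : i = n*m + ((k:ℕ):ℤ)*j := by exact_mod_cast ei
        rw [eiz]
        exact dvd_add (dvd_mul_left m n) (hmk.mul_right j)
      · have ereal : (i:ℝ) * g = ((n:ℝ)*(m:ℝ) - ((k:ℕ):ℝ)*(j:ℝ)) * g := by
          rw [hi', hn, ← hj']
          have : (2:ℝ) * n * π = (n:ℝ) * (2*π) := by ring
          rw [this, ← hm']
          ring
        have ei : (i:ℝ) = (n:ℝ)*(m:ℝ) - ((k:ℕ):ℝ)*(j:ℝ) := mul_right_cancel₀ hg0 ereal
        have eiz : i = n*m - ((k:ℕ):ℤ)*j := by exact_mod_cast ei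
        rw [eiz]
        exact dvd_sub (dvd_mul_left m n) (hmk.mul_right j)
    obtain ⟨q, hq⟩ := hdvd
    have harc : Real.arccos x = (q:ℝ) * (2*π) := by
      rw [← hi', hq]
      push_cast
      rw [mul_comm (m:ℝ) (q:ℝ), mul_assoc, hm']
    have : x = 1 := by
      rw [← hθx, harc, Real.cos_int_mul_two_pi]
    exact hx1 this

end Main



lemma abs_cos_ge (z : ℂ) : |Real.sinh z.im| ≤ ‖Complex.cos z‖ := by
  have h2 : (‖Complex.cos z‖)^2
      = (Real.cos z.re * Real.cosh z.im)^2 + (Real.sin z.re * Real.sinh z.im)^2 := by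
    rw [← Complex.normSq_eq_norm_sq, Complex.cos_eq, Complex.normSq_apply]
    simp [Complex.cos_ofReal_re, Complex.sin_ofReal_re, Complex.sinh_ofReal_re,
      Complex.cosh_ofReal_re]
    ring
  have h3 : (Real.sinh z.im)^2 ≤ (‖Complex.cos z‖)^2 := by
    rw [h2]
    nlinarith [Real.cosh_sq z.im, Real.sin_sq_add_cos_sq z.re,
      sq_nonneg (Real.sin z.re * Real.sinh z.im), sq_nonneg (Real.cos z.re),
      sq_nonneg (Real.sinh z.im), sq_nonneg (Real.sin z.re)]
  have h4 : (0:ℝ) ≤ ‖Complex.cos z‖ := norm_nonneg _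
  nlinarith [sq_abs (Real.sinh z.im), abs_nonneg (Real.sinh z.im)]

end Stmt11Aux

open Stmt11Aux

theorem stmt_11 (a : ℝ) (c : ℝ → ℂ) (hc0 : c 0 = 1)
    (hc : ∀ s t : ℝ, c (s + t) + c (s - t) = 2 * c s * c t)
    (hb : ∃ M : ℝ, ∀ t : ℝ, ‖c t‖ ≤ M)
    (hdisc : ¬ Continuous c) :
    (⨆ t : ℝ, ‖((Real.cos (a * t) : ℝ) : ℂ) - c t‖) = 2 ∧
    Filter.limsup (fun t : ℝ => ‖((Real.cos (a * t) : ℝ) : ℂ) - c t‖)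
      (nhdsWithin (0 : ℝ) {(0 : ℝ)}ᶜ) = 2 := by
  obtain ⟨M, hM⟩ := hb
  -- `c` is real-valued
  have hreal : ∀ t : ℝ, c t = ((c t).re : ℂ) := by
    intro t
    obtain ⟨ζ, hζ⟩ := Complex.cos_surjective (c t)
    have hiter : ∀ n : ℕ, c (2^n * t) = Complex.cos ((2^n : ℂ) * ζ) := by
      intro n
      induction n with
      | zero => simpa using hζ.symm
      | succ n ihn =>
        have h := hc (2^n * t) (2^n * t)
        rw [sub_self, hc0] at h
        have e : (2:ℝ)^n * t + 2^n * t = 2^(n+1) * t := by ring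
        rw [e, ihn] at h
        have e2 : ((2:ℂ)^(n+1)) * ζ = 2 * ((2^n : ℂ) * ζ) := by ring
        rw [e2, Complex.cos_two_mul]
        linear_combination h
    have him : ζ.im = 0 := by
      by_contra him
      have him' : 0 < |ζ.im| := abs_pos.mpr him
      have habs : ∀ n : ℕ, Real.sinh ((2:ℝ)^n * |ζ.im|) ≤ M := by
        intro n
        have h1 := abs_cos_ge ((2^n : ℂ) * ζ)
        have h2 : ((2^n : ℂ) * ζ).im = (2:ℝ)^n * ζ.im := by
          rw [Complex.mul_im]
          have e1 : ((2:ℂ)^n).re = (2:ℝ)^n := by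
            rw [show ((2:ℂ)^n) = (((2:ℝ)^n : ℝ) : ℂ) by push_cast; ring, Complex.ofReal_re]
          have e2 : ((2:ℂ)^n).im = 0 := by
            rw [show ((2:ℂ)^n) = (((2:ℝ)^n : ℝ) : ℂ) by push_cast; ring, Complex.ofReal_im]
          rw [e1, e2]
          ring
        rw [h2] at h1
        have h3 : Real.sinh ((2:ℝ)^n * |ζ.im|) = |Real.sinh ((2:ℝ)^n * ζ.im)| := by
          rw [Real.abs_sinh, abs_mul, abs_of_nonneg (by positivity : (0:ℝ) ≤ 2^n)]
        rw [h3]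
        calc |Real.sinh ((2:ℝ)^n * ζ.im)| ≤ ‖Complex.cos ((2^n : ℂ) * ζ)‖ := h1
        _ = ‖c (2^n * t)‖ := by rw [← hiter n]
        _ ≤ M := hM _
      obtain ⟨n, hn⟩ := pow_unbounded_of_one_lt (Real.arsinh M / |ζ.im|)
        (by norm_num : (1:ℝ) < 2)
      rw [div_lt_iff₀ him'] at hn
      have : Real.sinh (Real.arsinh M) < Real.sinh ((2:ℝ)^n * |ζ.im|) :=
        Real.sinh_lt_sinh.mpr hn
      rw [Real.sinh_arsinh] at this
      linarith [habs n]
    have hζre : (ζ.re : ℂ) = ζ := Complex.ext (by simp) (by simp [him])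
    have hct : c t = ((Real.cos ζ.re : ℝ) : ℂ) := by
      rw [Complex.ofReal_cos, hζre]
      exact hζ.symm
    rw [hct]
    simp
  set r : ℝ → ℝ := fun t => (c t).re with hrdef
  have hcr : ∀ t, c t = ((r t : ℝ) : ℂ) := hreal
  have hr0 : r 0 = 1 := by
    have := hc0
    simp [hrdef, this]
  have hrfe : ∀ s t : ℝ, r (s + t) + r (s - t) = 2 * r s * r t := by
    intro s t
    have h := hc s t
    rw [hcr (s+t), hcr (s-t), hcr s, hcr t] at h
    exact_mod_cast h
  have hbM : ∀ t, |r t| ≤ M := by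
    intro t
    have := hM t
    rw [hcr t, Complex.norm_real, Real.norm_eq_abs] at this
    exact this
  have hb1 : ∀ t, |r t| ≤ 1 := abs_r_le_one hr0 hrfe hbM
  have hcontr : ¬ Continuous r := by
    intro hcont
    apply hdisc
    have : c = fun t => ((r t : ℝ) : ℂ) := funext hcr
    rw [this]
    exact Complex.continuous_ofReal.comp hcont
  have hnt : ¬ Tendsto r (𝓝 0) (𝓝 1) := fun h => hcontr (cont_of_cont0 hr0 hrfe hb1 h)
  obtain ⟨u, hu0, hulim⟩ := neg_one_mem_A hr0 hrfe hb1 hnt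
  -- norm identity
  have hnorm_eq : ∀ t, ‖((Real.cos (a * t) : ℝ) : ℂ) - c t‖ = |Real.cos (a * t) - r t| := by
    intro t
    rw [hcr t]
    have e : ((Real.cos (a*t) : ℝ) : ℂ) - ((r t : ℝ) : ℂ) = ((Real.cos (a*t) - r t : ℝ) : ℂ) := by
      push_cast; ring
    rw [e, Complex.norm_real, Real.norm_eq_abs]
  have hle2 : ∀ t, ‖((Real.cos (a * t) : ℝ) : ℂ) - c t‖ ≤ 2 := by
    intro t
    rw [hnorm_eq t]
    have h1 : |Real.cos (a*t) - r t| ≤ |Real.cos (a*t)| + |r t| := by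
      simpa [sub_eq_add_neg] using abs_add_le (Real.cos (a*t)) (-(r t))
    have h2 := Real.abs_cos_le_one (a*t)
    have h3 := hb1 t
    linarith
  -- frequently witnesses
  have hfreq : ∀ ε : ℝ, 0 < ε → ∀ δ : ℝ, 0 < δ →
      ∃ t : ℝ, 0 < |t| ∧ |t| < δ ∧ 2 - ε ≤ ‖((Real.cos (a * t) : ℝ) : ℂ) - c t‖ := by
    intro ε hε δ hδ
    set ε' : ℝ := min (ε/2) (1/2) with hε'def
    have hε'pos : 0 < ε' := by
      apply lt_min (by linarith) (by norm_num)
    have h1 : Tendsto (fun n => Real.cos (a * u n)) atTop (𝓝 1) := by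
      have ht : Tendsto (fun n => a * u n) atTop (𝓝 0) := by
        simpa using hu0.const_mul a
      have := (Real.continuous_cos.tendsto 0).comp ht
      simpa [Function.comp_def] using this
    have e1 : ∀ᶠ n in atTop, 1 - ε' < Real.cos (a * u n) :=
      h1.eventually (eventually_gt_nhds (by linarith))
    have e2 : ∀ᶠ n in atTop, r (u n) < -1 + ε' :=
      hulim.eventually (eventually_lt_nhds (by linarith))
    have e3 : ∀ᶠ n in atTop, |u n| < δ := by
      have := hu0.eventually (Metric.ball_mem_nhds (0:ℝ) hδ)
      simpa [Real.dist_eq] using this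
    obtain ⟨n, h1n, h2n, h3n⟩ := (e1.and (e2.and e3)).exists
    refine ⟨u n, ?_, h3n, ?_⟩
    · rw [abs_pos]
      intro h0
      rw [h0, hr0] at h2n
      have : ε' ≤ 1/2 := min_le_right _ _
      linarith
    · rw [hnorm_eq]
      have hcos := h1n
      have hrn := h2n
      have hε2 : ε' ≤ ε/2 := min_le_left _ _
      have : 2 - ε ≤ Real.cos (a * u n) - r (u n) := by linarith
      exact this.trans (le_abs_self _)
  constructor
  · -- supremum
    have hbdd : BddAbove (Set.range fun t => ‖((Real.cos (a * t) : ℝ) : ℂ) - c t‖) := by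
      refine ⟨2, ?_⟩
      rintro _ ⟨t, rfl⟩
      exact hle2 t
    apply le_antisymm
    · exact ciSup_le hle2
    · by_contra hlt
      push_neg at hlt
      set S := ⨆ t : ℝ, ‖((Real.cos (a * t) : ℝ) : ℂ) - c t‖ with hSdef
      obtain ⟨t, ht0, htδ, hts⟩ := hfreq ((2 - S)/2) (by linarith) 1 one_pos
      have := le_ciSup hbdd t
      rw [← hSdef] at this
      linarith
  · -- limsup
    have hNe : (𝓝[≠] (0:ℝ)).NeBot := by infer_instance
    apply le_antisymm
    · refine limsup_le_of_le ?_ (by filter_upwards [] with t; exact hle2 t)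
      exact isCoboundedUnder_le_of_le _ (fun t => norm_nonneg _)
    · by_contra hlt
      push_neg at hlt
      set L := limsup (fun t : ℝ => ‖((Real.cos (a * t) : ℝ) : ℂ) - c t‖) (𝓝[≠] (0:ℝ)) with hLdef
      have hfr : ∃ᶠ t in 𝓝[≠] (0:ℝ), 2 - (2 - L)/2 ≤ ‖((Real.cos (a * t) : ℝ) : ℂ) - c t‖ := by
        rw [frequently_iff]
        intro U hU
        rw [mem_nhdsWithin] at hU
        obtain ⟨V, hVopen, hV0, hVsub⟩ := hU
        obtain ⟨δ, hδ, hball⟩ := Metric.isOpen_iff.mp hVopen 0 hV0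
        obtain ⟨t, ht0, htδ, hts⟩ := hfreq ((2 - L)/2) (by linarith) δ hδ
        refine ⟨t, hVsub ⟨hball ?_, ?_⟩, hts⟩
        · rw [Metric.mem_ball, Real.dist_eq, sub_zero]; exact htδ
        · simp only [Set.mem_compl_iff, Set.mem_singleton_iff]
          intro h; rw [h] at ht0; simp at ht0
      have hbdd2 : IsBoundedUnder (· ≤ ·) (𝓝[≠] (0:ℝ))
          (fun t : ℝ => ‖((Real.cos (a * t) : ℝ) : ℂ) - c t‖) :=
        isBoundedUnder_of ⟨2, hle2⟩
      have := le_limsup_of_frequently_le hfr hbdd2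
      rw [← hLdef] at this
      linarith
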